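/- Let f : ℝ^l → ℝ^n with n ≤ l be strictly differentiable at a point z̄ with strict derivative ∇f(z̄). Then f is linearly open around z̄ if and only if the linear map ∇f(z̄) : ℝ^l → ℝ^n is surjective. -/

import Mathlib

open Metric Set Filter

noncomputable section

/-- `ℝ^n` with the Euclidean norm. -/
abbrev Euc (n : ℕ) : Type := EuclideanSpace ℝ (Fin n)

/-- `ℝ^n × ℝ^m` identified with `ℝ^{n+m}` with its Euclidean norm. -/
abbrev EucProd (n m : ℕ) : Type := WithLp 2 (Euc n × Euc m)

/-- Build a point of `ℝ^n × ℝ^m`. -/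
def mkProd {n m : ℕ} (x : Euc n) (u : Euc m) : EucProd n m :=
  (WithLp.equiv 2 (Euc n × Euc m)).symm (x, u)

def pFst {n m : ℕ} (p : EucProd n m) : Euc n := ((WithLp.equiv 2 (Euc n × Euc m)) p).1

def pSnd {n m : ℕ} (p : EucProd n m) : Euc m := ((WithLp.equiv 2 (Euc n × Euc m)) p).2

/-- View a plain vector as a point of Euclidean space. -/
def vecE {n : ℕ} (v : Fin n → ℝ) : Euc n := WithLp.toLp 2 v

/-- `f` is linearly open around `z` with modulus `κ > 0`: on some neighborhood `U` of `z`,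
`B_{κ r}(f w) ⊆ f (B_r w)` whenever `w ∈ U`, `r > 0`, and `B_r w ⊆ U`. -/
def LinOpenWith {E F : Type*} [NormedAddCommGroup E] [NormedAddCommGroup F]
    (f : E → F) (z : E) (κ : ℝ) : Prop :=
  0 < κ ∧ ∃ U ∈ nhds z, ∀ w ∈ U, ∀ r : ℝ, 0 < r → closedBall w r ⊆ U →
      closedBall (f w) (κ * r) ⊆ f '' closedBall w r

/-- `f` is linearly open around `z` (with some modulus `κ > 0`). -/
def LinOpenAround {E F : Type*} [NormedAddCommGroup E] [NormedAddCommGroup F]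
    (f : E → F) (z : E) : Prop :=
  ∃ κ : ℝ, LinOpenWith f z κ

/-- `f` is `C¹` on an open neighborhood of `z`. -/
def C1Near {E F : Type*} [NormedAddCommGroup E] [NormedSpace ℝ E]
    [NormedAddCommGroup F] [NormedSpace ℝ F] (f : E → F) (z : E) : Prop :=
  ∃ U : Set E, IsOpen U ∧ z ∈ U ∧ ContDiffOn ℝ 1 f U

/-- The partial Jacobian matrix `A = ∂f/∂x(0,0)`. -/
def xJac {n m : ℕ} (f : EucProd n m → Euc n) : Matrix (Fin n) (Fin n) ℝ :=
  Matrix.of fun i j => fderiv ℝ f 0 (mkProd (EuclideanSpace.single j 1) 0) i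

/-- The partial Jacobian matrix `B = ∂f/∂u(0,0)`. -/
def uJac {n m : ℕ} (f : EucProd n m → Euc n) : Matrix (Fin n) (Fin m) ℝ :=
  Matrix.of fun i j => fderiv ℝ f 0 (mkProd 0 (EuclideanSpace.single j 1)) i

/-- The set of complex eigenvalues of a real matrix. -/
def specC {n : ℕ} (A : Matrix (Fin n) (Fin n) ℝ) : Set ℂ :=
  spectrum ℂ (A.map (Complex.ofReal : ℝ → ℂ))

/-- Local exponential stabilizability of `ẋ = f(x,u)` by stationary feedback laws
satisfying the regularity predicate `P`. -/
def ExpStabWith {n m : ℕ} (f : EucProd n m → Euc n) (P : (Euc n → Euc m) → Prop) : Prop :=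
  ∃ u : Euc n → Euc m, P u ∧ u 0 = 0 ∧
    ∃ α : ℝ, 0 < α ∧ ∃ M : ℝ, 0 < M ∧ ∃ δ : ℝ, 0 < δ ∧
      ∀ x₀ : Euc n, ‖x₀‖ < δ →
        ∃ x : ℝ → Euc n,
          (x 0 = x₀ ∧
            ∀ t ∈ Ici (0:ℝ), HasDerivWithinAt x (f (mkProd (x t) (u (x t)))) (Ici 0) t) ∧
          (∀ y : ℝ → Euc n,
            (y 0 = x₀ ∧
              ∀ t ∈ Ici (0:ℝ), HasDerivWithinAt y (f (mkProd (y t) (u (y t)))) (Ici 0) t) →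
            ∀ t ∈ Ici (0:ℝ), y t = x t) ∧
          ∀ t ∈ Ici (0:ℝ), ‖x t‖ ≤ M * Real.exp (-α * t) * ‖x₀‖

/-- Local exponential stabilizability by continuous stationary feedback laws. -/
def ExpStabCont {n m : ℕ} (f : EucProd n m → Euc n) : Prop :=
  ExpStabWith f Continuous

/-- Local exponential stabilizability by `C¹` stationary feedback laws. -/
def ExpStabC1 {n m : ℕ} (f : EucProd n m → Euc n) : Prop :=
  ExpStabWith f (fun u => ContDiff ℝ 1 u)

/-- Local asymptotic stabilizability of `ẋ = f(x,u)` by `C¹` stationary feedback laws. -/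
def AsympStabC1 {n m : ℕ} (f : EucProd n m → Euc n) : Prop :=
  ∃ u : Euc n → Euc m, ContDiff ℝ 1 u ∧ u 0 = 0 ∧
    ((∀ ε : ℝ, 0 < ε → ∃ δ : ℝ, 0 < δ ∧ ∀ x : ℝ → Euc n, ‖x 0‖ < δ →
        (∀ t ∈ Ici (0:ℝ), HasDerivWithinAt x (f (mkProd (x t) (u (x t)))) (Ici 0) t) →
        ∀ t ∈ Ici (0:ℝ), ‖x t‖ < ε) ∧
      ∃ δ₀ : ℝ, 0 < δ₀ ∧ ∀ x : ℝ → Euc n, ‖x 0‖ < δ₀ →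
        (∀ t ∈ Ici (0:ℝ), HasDerivWithinAt x (f (mkProd (x t) (u (x t)))) (Ici 0) t) →
        Tendsto x atTop (nhds 0))

/-- Local asymptotic stabilizability of the discrete-time system `x_{k+1} = f(x_k,u_k)`
by continuous stationary feedback laws. -/
def DiscAsympStabCont {n m : ℕ} (f : EucProd n m → Euc n) : Prop :=
  ∃ u : Euc n → Euc m, Continuous u ∧ u 0 = 0 ∧
    ((∀ ε : ℝ, 0 < ε → ∃ δ : ℝ, 0 < δ ∧ ∀ x₀ : Euc n, ‖x₀‖ < δ →
        ∀ k : ℕ, ‖(fun x => f (mkProd x (u x)))^[k] x₀‖ < ε) ∧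
      ∃ δ₀ : ℝ, 0 < δ₀ ∧ ∀ x₀ : Euc n, ‖x₀‖ < δ₀ →
        Tendsto (fun k => (fun x => f (mkProd x (u x)))^[k] x₀) atTop (nhds 0))

/-- `f : ℝ^l → ℝ^n` (`n ≤ l`) strictly differentiable at `z̄` is linearly open
around `z̄` iff its strict derivative is surjective. -/
theorem linear_openness_iff_surjective {l n : ℕ} (hn : n ≤ l)
    (f : Euc l → Euc n) (zbar : Euc l) (D : Euc l →L[ℝ] Euc n)
    (hf : HasStrictFDerivAt f D zbar) :
    LinOpenAround f zbar ↔ Function.Surjective D := by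
  constructor
  · -- linear openness implies surjectivity
    rintro ⟨κ, hκ, U, hU, hopen⟩
    by_contra hsurj
    -- find a unit vector orthogonal to the range of D
    set K : Submodule ℝ (Euc n) := LinearMap.range (D : Euc l →ₗ[ℝ] Euc n) with hK
    have hKne : K ≠ ⊤ := by
      intro h
      exact hsurj (LinearMap.range_eq_top.1 h)
    have hKbot : Kᗮ ≠ ⊥ := by
      intro h
      exact hKne (by simpa using Submodule.orthogonal_eq_bot_iff.1 h)
    obtain ⟨w, hwK, hw0⟩ := Submodule.exists_mem_ne_zero_of_ne_bot hKbot
    set v : Euc n := ‖w‖⁻¹ • w with hv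
    have hvnorm : ‖v‖ = 1 := by
      rw [hv, norm_smul, norm_inv, norm_norm]
      field_simp [norm_ne_zero_iff.2 hw0]
    have hvK : v ∈ Kᗮ := Submodule.smul_mem _ _ hwK
    -- key inequality: for y ∈ K and c ≥ 0, c ≤ ‖c • v - y‖
    have key : ∀ (c : ℝ), 0 ≤ c → ∀ y ∈ K, c ≤ ‖c • v - y‖ := by
      intro c hc y hy
      have h1 : inner ℝ v (c • v - y) = (c : ℝ) := by
        rw [inner_sub_right, real_inner_smul_right,
          real_inner_self_eq_norm_sq, hvnorm]
        have h1 : inner ℝ y v = (0 : ℝ) := (Submodule.mem_orthogonal K v).1 hvK y hy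
        have h2 : inner ℝ v y = (0 : ℝ) := by rw [real_inner_comm]; exact h1
        rw [h2]; ring
      calc c = inner ℝ v (c • v - y) := h1.symm
        _ ≤ ‖v‖ * ‖c • v - y‖ := real_inner_le_norm _ _
        _ = ‖c • v - y‖ := by rw [hvnorm, one_mul]
    -- use strict differentiability with ε = κ/2
    have hlo : HasFDerivAt f D zbar := hf.hasFDerivAt
    have hε : ∀ᶠ z in nhds zbar, ‖f z - f zbar - D (z - zbar)‖ ≤ κ / 2 * ‖z - zbar‖ :=
      hlo.isLittleO.def (by linarith)
    obtain ⟨δ, hδ0, hδ⟩ := Metric.eventually_nhds_iff_ball.1 hε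
    obtain ⟨r, hr0, hrU, hrδ⟩ : ∃ r : ℝ, 0 < r ∧ closedBall zbar r ⊆ U ∧ r < δ := by
      obtain ⟨r₁, hr₁, hball⟩ := Metric.mem_nhds_iff.1 hU
      refine ⟨min (r₁ / 2) (δ / 2), by positivity, ?_, ?_⟩
      · refine fun x hx => hball ?_
        have := mem_closedBall.1 hx
        exact mem_ball.2 (lt_of_le_of_lt this (by
          have := min_le_left (r₁ / 2) (δ / 2); linarith))
      · have := min_le_right (r₁ / 2) (δ / 2); linarith
    have hzU : zbar ∈ U := hrU (mem_closedBall_self hr0.le)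
    have hsub := hopen zbar hzU r hr0 hrU
    -- the point f zbar + (κ * r) • v is in the κr-ball
    have hpt : f zbar + (κ * r) • v ∈ closedBall (f zbar) (κ * r) := by
      rw [mem_closedBall, dist_eq_norm]
      simp only [add_sub_cancel_left, norm_smul, hvnorm, mul_one]
      rw [Real.norm_eq_abs, abs_of_nonneg (by positivity)]
    obtain ⟨z, hz, hfz⟩ := hsub hpt
    have hzb : ‖z - zbar‖ ≤ r := by
      rw [← dist_eq_norm]; exact mem_closedBall.1 hz
    have happrox : ‖f z - f zbar - D (z - zbar)‖ ≤ κ / 2 * ‖z - zbar‖ := by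
      by_cases hzz : z = zbar
      · simp [hzz]
      · exact hδ z (by rw [mem_ball, dist_eq_norm]; exact lt_of_le_of_lt hzb hrδ)
    have hfz' : f z - f zbar = (κ * r) • v := by rw [hfz]; abel
    have hDK : D (z - zbar) ∈ K := ⟨z - zbar, rfl⟩
    have := key (κ * r) (by positivity) (D (z - zbar)) hDK
    rw [← hfz'] at this
    have : κ * r ≤ κ / 2 * r := by
      calc κ * r ≤ ‖f z - f zbar - D (z - zbar)‖ := this
        _ ≤ κ / 2 * ‖z - zbar‖ := happrox
        _ ≤ κ / 2 * r := by
            apply mul_le_mul_of_nonneg_left hzb (by linarith)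
    nlinarith [hκ, hr0]
  · -- surjectivity implies linear openness
    intro hsurj
    have hrange : LinearMap.range D = ⊤ := LinearMap.range_eq_top.2 (by exact hsurj)
    set f'symm := D.nonlinearRightInverseOfSurjective hrange with hf'symm
    have hσpos : 0 < f'symm.nnnorm := D.nonlinearRightInverseOfSurjective_nnnorm_pos hrange
    set c : NNReal := f'symm.nnnorm⁻¹ / 2 with hc
    have hcpos : 0 < c := by positivity
    obtain ⟨s, hs_nhds, hs⟩ := hf.approximates_deriv_on_nhds (Or.inr hcpos)
    refine ⟨(f'symm.nnnorm : ℝ)⁻¹ - c, ⟨?_, s, hs_nhds, ?_⟩⟩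
    · have : (c : ℝ) = (f'symm.nnnorm : ℝ)⁻¹ / 2 := by
        rw [hc]; push_cast; ring
      rw [this]
      have h1 : (0:ℝ) < (f'symm.nnnorm : ℝ)⁻¹ := by positivity
      linarith
    · intro w _ r hr hball
      exact hs.surjOn_closedBall_of_nonlinearRightInverse f'symm hr.le hball
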